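/- arXiv:2412.19258 — 5 statements merged into one kernel-verified Lean document; each statement's English description precedes it below -/
import Mathlib

section
/- For any two nontrivial connected finite simple graphs G and H, the cycle hull number of the strong product G ⊠ H equals 2. -/
open SimpleGraph

variable {V α β : Type*}

/-- A set `S` is cycle convex in `G` if no vertex outside `S` lies on a cycle in the
subgraph induced by `S ∪ {w}`. -/
def CycleConvex (G : SimpleGraph V) (S : Set V) : Prop :=
  ∀ w : V, w ∉ S →
    ∀ c : (G.induce (insert w S)).Walk ⟨w, Set.mem_insert w S⟩ ⟨w, Set.mem_insert w S⟩,
      ¬ c.IsCycle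

/-- The cycle convex hull of `S`: the smallest cycle convex set containing `S`. -/
def cycleHull (G : SimpleGraph V) (S : Set V) : Set V :=
  ⋂₀ {T : Set V | S ⊆ T ∧ CycleConvex G T}

/-- The cycle hull number: minimum size of a set whose cycle convex hull is everything. -/
noncomputable def cycleHullNumber (G : SimpleGraph V) : ℕ :=
  sInf {n : ℕ | ∃ S : Set V, S.ncard = n ∧ cycleHull G S = Set.univ}

/-- The cycle convexity number: maximum size of a proper cycle convex set. -/
noncomputable def cycleConvexityNumber (G : SimpleGraph V) : ℕ :=
  sSup {n : ℕ | ∃ S : Set V, S.ncard = n ∧ CycleConvex G S ∧ S ≠ Set.univ}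

/-- The independence number of a graph. -/
noncomputable def indepNumber (G : SimpleGraph V) : ℕ :=
  sSup {n : ℕ | ∃ S : Set V, S.ncard = n ∧ S.Pairwise fun a b => ¬ G.Adj a b}

/-- The strong product of two simple graphs. -/
def strongProd (G : SimpleGraph α) (H : SimpleGraph β) : SimpleGraph (α × β) where
  Adj x y := (G.Adj x.1 y.1 ∧ x.2 = y.2) ∨ (x.1 = y.1 ∧ H.Adj x.2 y.2) ∨
    (G.Adj x.1 y.1 ∧ H.Adj x.2 y.2)
  symm := ⟨fun x y h => by
    rcases h with ⟨h1, h2⟩ | ⟨h1, h2⟩ | ⟨h1, h2⟩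
    · exact Or.inl ⟨h1.symm, h2.symm⟩
    · exact Or.inr (Or.inl ⟨h1.symm, h2.symm⟩)
    · exact Or.inr (Or.inr ⟨h1.symm, h2.symm⟩)⟩
  loopless := ⟨fun x h => by
    rcases h with ⟨h1, _⟩ | ⟨_, h2⟩ | ⟨h1, _⟩
    · exact G.irrefl h1
    · exact H.irrefl h2
    · exact G.irrefl h1⟩

/-- The lexicographic product of two simple graphs. -/
def lexProd (G : SimpleGraph α) (H : SimpleGraph β) : SimpleGraph (α × β) where
  Adj x y := G.Adj x.1 y.1 ∨ (x.1 = y.1 ∧ H.Adj x.2 y.2)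
  symm := ⟨fun x y h => by
    rcases h with h1 | ⟨h1, h2⟩
    · exact Or.inl h1.symm
    · exact Or.inr ⟨h1.symm, h2.symm⟩⟩
  loopless := ⟨fun x h => by
    rcases h with h1 | ⟨_, h2⟩
    · exact G.irrefl h1
    · exact H.irrefl h2⟩


lemma triangle_mem {V : Type*} {G : SimpleGraph V} {T : Set V} (hT : CycleConvex G T)
    {u v w : V} (hu : u ∈ T) (hv : v ∈ T) (huv : G.Adj u v) (hwu : G.Adj w u)
    (hwv : G.Adj w v) : w ∈ T := by
  by_contra hw
  set s := insert w T with hs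
  let W : s := ⟨w, Set.mem_insert w T⟩
  let U : s := ⟨u, Set.mem_insert_of_mem _ hu⟩
  let Vv : s := ⟨v, Set.mem_insert_of_mem _ hv⟩
  have aWU : (G.induce s).Adj W U := hwu
  have aUV : (G.induce s).Adj U Vv := huv
  have aVW : (G.induce s).Adj Vv W := hwv.symm
  have hne1 : w ≠ u := hwu.ne
  have hne2 : w ≠ v := hwv.ne
  have hne3 : u ≠ v := huv.ne
  refine hT w hw (Walk.cons aWU (Walk.cons aUV (Walk.cons aVW Walk.nil))) ?_
  simp [Walk.isCycle_def, Walk.isTrail_def, Sym2.eq_iff, Subtype.ext_iff, W, U, Vv,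
    hne1, hne2, hne3, hne1.symm, hne2.symm, hne3.symm]

lemma walk_prop {α : Type*} {G : SimpleGraph α} (P : α → Prop)
    (step : ∀ a b, G.Adj a b → P a → P b) :
    ∀ {a b : α}, G.Walk a b → P a → P b := by
  intro a b p
  induction p with
  | nil => exact id
  | cons h _ ih => exact fun ha => ih (step _ _ h ha)

lemma exists_adj' {α : Type*} {G : SimpleGraph α} [Nontrivial α] (hG : G.Connected)
    (a : α) : ∃ b, G.Adj a b := by
  obtain ⟨b, hb⟩ := exists_ne a
  obtain ⟨p⟩ := hG a b
  cases p with
  | nil => exact absurd rfl hb.symm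
  | cons h p => exact ⟨_, h⟩

lemma subsingleton_convex {V : Type*} {G : SimpleGraph V} {S : Set V}
    (h : S.Subsingleton) : CycleConvex G S := by
  intro w hw c hc
  have hfin : (insert w S).Finite := h.finite.insert w
  haveI := hfin.fintype
  have h3 : 3 ≤ c.length := hc.three_le_length
  have hnodup : c.support.tail.Nodup := hc.2
  have hlen : c.support.tail.length = c.length := by
    have := c.length_support
    simp [List.length_tail, this]
  have hle : c.support.tail.length ≤ Fintype.card ↥(insert w S) := hnodup.length_le_card
  have hcard : Fintype.card ↥(insert w S) ≤ 2 := by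
    have h2 : (insert w S).ncard ≤ S.ncard + 1 := Set.ncard_insert_le w S
    have h1 : S.ncard ≤ 1 := by
      rcases Set.eq_empty_or_nonempty S with rfl | ⟨x, hx⟩
      · simp
      · have hx' : S = {x} := h.eq_singleton_of_mem hx
        simp [hx']
    have := (Nat.card_coe_set_eq (insert w S)).symm
    rw [Nat.card_eq_fintype_card] at this
    omega
  omega

theorem stmt_0 [Fintype α] [Fintype β] (G : SimpleGraph α) (H : SimpleGraph β)
    [Nontrivial α] [Nontrivial β] (hG : G.Connected) (hH : H.Connected) :
    cycleHullNumber (strongProd G H) = 2 := by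
  classical
  obtain ⟨g1, g2, hg⟩ : ∃ a b, G.Adj a b := by
    obtain ⟨a⟩ : Nonempty α := inferInstance
    exact ⟨a, exists_adj' hG a⟩
  obtain ⟨h1, h2, hh⟩ : ∃ a b, H.Adj a b := by
    obtain ⟨a⟩ : Nonempty β := inferInstance
    exact ⟨a, exists_adj' hH a⟩
  set SP := strongProd G H with hSP
  set S : Set (α × β) := {(g1, h1), (g2, h2)} with hSdef
  have key : ∀ T : Set (α × β), S ⊆ T → CycleConvex SP T → T = Set.univ := by
    intro T hST hT
    have hA : (g1, h1) ∈ T := hST (by simp [hSdef])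
    have hB : (g2, h2) ∈ T := hST (by simp [hSdef])
    have adjAB : SP.Adj (g1, h1) (g2, h2) := Or.inr (Or.inr ⟨hg, hh⟩)
    have hC : (g1, h2) ∈ T :=
      triangle_mem hT hA hB adjAB (Or.inr (Or.inl ⟨rfl, hh.symm⟩)) (Or.inl ⟨hg, rfl⟩)
    have row : ∀ g : α, (g, h1) ∈ T ∧ (g, h2) ∈ T := by
      intro g
      obtain ⟨p⟩ := hG g1 g
      refine walk_prop (G := G) (fun g => (g, h1) ∈ T ∧ (g, h2) ∈ T) ?_ p ⟨hA, hC⟩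
      rintro a b hab ⟨ha1, ha2⟩
      have huv : SP.Adj (a, h1) (a, h2) := Or.inr (Or.inl ⟨rfl, hh⟩)
      exact ⟨triangle_mem hT ha1 ha2 huv (Or.inl ⟨hab.symm, rfl⟩)
          (Or.inr (Or.inr ⟨hab.symm, hh⟩)),
        triangle_mem hT ha1 ha2 huv (Or.inr (Or.inr ⟨hab.symm, hh.symm⟩))
          (Or.inl ⟨hab.symm, rfl⟩)⟩
    have col : ∀ (g : α) (h : β), (g, h) ∈ T := by
      intro g h
      obtain ⟨g', hgg'⟩ := exists_adj' hG g
      obtain ⟨p⟩ := hH h1 h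
      have := walk_prop (G := H) (fun h => (g, h) ∈ T ∧ (g', h) ∈ T) ?_ p
        ⟨(row g).1, (row g').1⟩
      · exact this.1
      rintro a b hab ⟨ha1, ha2⟩
      have huv : SP.Adj (g, a) (g', a) := Or.inl ⟨hgg', rfl⟩
      exact ⟨triangle_mem hT ha1 ha2 huv (Or.inr (Or.inl ⟨rfl, hab.symm⟩))
          (Or.inr (Or.inr ⟨hgg', hab.symm⟩)),
        triangle_mem hT ha1 ha2 huv (Or.inr (Or.inr ⟨hgg'.symm, hab.symm⟩))
          (Or.inr (Or.inl ⟨rfl, hab.symm⟩))⟩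
    ext ⟨g, h⟩
    simp [col g h]
  have hhull : cycleHull SP S = Set.univ := by
    rw [Set.eq_univ_iff_forall]
    intro x
    rw [cycleHull, Set.mem_sInter]
    rintro T ⟨hST, hT⟩
    rw [key T hST hT]
    trivial
  have hne : (g1, h1) ≠ (g2, h2) := by
    intro hEq
    exact hg.ne (congrArg Prod.fst hEq)
  have hcardS : S.ncard = 2 := Set.ncard_pair hne
  have h2mem : 2 ∈ {n : ℕ | ∃ S : Set (α × β), S.ncard = n ∧ cycleHull SP S = Set.univ} :=
    ⟨S, hcardS, hhull⟩
  have hlb : ∀ n ∈ {n : ℕ | ∃ S : Set (α × β), S.ncard = n ∧ cycleHull SP S = Set.univ},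
      2 ≤ n := by
    rintro n ⟨S', rfl, hhull'⟩
    by_contra hlt
    push_neg at hlt
    have hsub : S'.Subsingleton := by
      intro x hx y hy
      by_contra hxy
      have hpair : ({x, y} : Set (α × β)) ⊆ S' := by
        rintro z (rfl | rfl) <;> assumption
      have := Set.ncard_le_ncard hpair (Set.toFinite S')
      rw [Set.ncard_pair hxy] at this
      omega
    have hconv := subsingleton_convex (G := SP) hsub
    have hsubset : cycleHull SP S' ⊆ S' :=
      Set.sInter_subset_of_mem ⟨subset_rfl, hconv⟩
    rw [hhull'] at hsubset
    have hSu : S' = Set.univ := Set.univ_subset_iff.mp hsubset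
    have hcu : S'.ncard = Fintype.card α * Fintype.card β := by
      rw [hSu, Set.ncard_univ, Nat.card_eq_fintype_card, Fintype.card_prod]
    have hα := Fintype.one_lt_card (α := α)
    have hβ := Fintype.one_lt_card (α := β)
    nlinarith
  exact le_antisymm (Nat.sInf_le h2mem) (le_csInf ⟨2, h2mem⟩ hlb)
end

section
/- For any two nontrivial connected finite simple graphs G and H, the cycle hull number of the lexicographic product G ∘ H equals 2. -/
open SimpleGraph

variable {V α β : Type*}

lemma triangle_isCycle (G : SimpleGraph V) {a b c : V}
    (hab : G.Adj a b) (hbc : G.Adj b c) (hca : G.Adj c a) :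
    (Walk.cons hab (Walk.cons hbc (Walk.cons hca Walk.nil))).IsCycle := by
  simp [Walk.isCycle_def, Walk.isTrail_def, Sym2.eq_iff]
  aesop

lemma forcing {G : SimpleGraph V} {T : Set V} (hT : CycleConvex G T) {u v w : V}
    (hu : u ∈ T) (hv : v ∈ T) (hwu : G.Adj w u) (hwv : G.Adj w v) (huv : G.Adj u v) :
    w ∈ T := by
  by_contra hw
  have h1 : (G.induce (insert w T)).Adj ⟨w, Set.mem_insert w T⟩ ⟨u, Set.mem_insert_of_mem w hu⟩ := hwu
  have h2 : (G.induce (insert w T)).Adj ⟨u, Set.mem_insert_of_mem w hu⟩ ⟨v, Set.mem_insert_of_mem w hv⟩ := huv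
  have h3 : (G.induce (insert w T)).Adj ⟨v, Set.mem_insert_of_mem w hv⟩ ⟨w, Set.mem_insert w T⟩ := hwv.symm
  exact hT w hw (Walk.cons h1 (Walk.cons h2 (Walk.cons h3 Walk.nil)))
    (triangle_isCycle _ h1 h2 h3)

lemma small_convex [Finite V] (G : SimpleGraph V) {S : Set V} (hS : S.ncard ≤ 1) :
    CycleConvex G S := by
  intro w hw c hc
  have h3 := hc.three_le_length
  have hnd := hc.support_nodup
  haveI : Fintype ↥(insert w S) := (Set.toFinite _).fintype
  have hcard : Fintype.card ↥(insert w S) ≤ 2 := by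
    have := Set.ncard_insert_le w S
    rw [Set.ncard_eq_toFinset_card', Set.toFinset_card] at this
    omega
  have hlen : c.support.tail.length ≤ 2 := le_trans (hnd.length_le_card) hcard
  have : c.support.length = c.length + 1 := Walk.length_support c
  simp [List.length_tail, this] at hlen
  omega

lemma exists_adj_of_connected (G : SimpleGraph V) [Nontrivial V] (hG : G.Connected) :
    ∃ a b, G.Adj a b := by
  obtain ⟨x, y, hxy⟩ := exists_pair_ne V
  obtain ⟨p⟩ := hG.preconnected x y
  cases p with
  | nil => exact absurd rfl hxy
  | cons h _ => exact ⟨_, _, h⟩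

theorem stmt_1 [Fintype α] [Fintype β] (G : SimpleGraph α) (H : SimpleGraph β)
    [Nontrivial α] [Nontrivial β] (hG : G.Connected) (hH : H.Connected) :
    cycleHullNumber (lexProd G H) = 2 := by
  classical
  obtain ⟨a, a', haa⟩ := exists_adj_of_connected G hG
  obtain ⟨h1, h2, h12⟩ := exists_adj_of_connected H hH
  set S : Set (α × β) := {(a, h1), (a, h2)} with hSdef
  -- the key spreading claim
  have key : ∀ T : Set (α × β), S ⊆ T → CycleConvex (lexProd G H) T → T = Set.univ := by
    intro T hST hconv
    have step : ∀ x : α, (x, h1) ∈ T → (x, h2) ∈ T → ∀ y, G.Adj x y → ∀ b, (y, b) ∈ T := by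
      intro x hx1 hx2 y hxy b
      exact forcing hconv hx1 hx2 (Or.inl hxy.symm) (Or.inl hxy.symm)
        (Or.inr ⟨rfl, h12⟩)
    have walkind : ∀ (x y : α), G.Walk x y → (∀ c, (x, c) ∈ T) → (∀ c, (y, c) ∈ T) := by
      intro x y p
      induction p with
      | nil => exact id
      | cons h _ ih => exact fun hx => ih (step _ (hx h1) (hx h2) _ h)
    have fa' : ∀ c, (a', c) ∈ T :=
      step a (hST (Set.mem_insert _ _)) (hST (Set.mem_insert_of_mem _ rfl)) a' haa
    have fa : ∀ c, (a, c) ∈ T := step a' (fa' h1) (fa' h2) a haa.symm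
    have full : ∀ x c, (x, c) ∈ T := by
      intro x
      obtain ⟨p⟩ := hG.preconnected a x
      exact walkind a x p fa
    ext ⟨x, c⟩
    simp [full x c]
  have h2M : 2 ∈ {n : ℕ | ∃ S : Set (α × β), S.ncard = n ∧ cycleHull (lexProd G H) S = Set.univ} := by
    refine ⟨S, ?_, ?_⟩
    · have : (a, h1) ≠ (a, h2) := by simp [h12.ne]
      exact Set.ncard_pair this
    · rw [Set.eq_univ_iff_forall]
      intro x
      exact Set.mem_sInter.mpr fun T hT => by rw [key T hT.1 hT.2]; trivial
  have hlow : ∀ n ∈ {n : ℕ | ∃ S : Set (α × β), S.ncard = n ∧ cycleHull (lexProd G H) S = Set.univ}, 2 ≤ n := by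
    rintro n ⟨U, hU, hhull⟩
    by_contra hn
    have hU1 : U.ncard ≤ 1 := by omega
    have hconv : CycleConvex (lexProd G H) U := small_convex _ hU1
    have hsub : cycleHull (lexProd G H) U ⊆ U :=
      Set.sInter_subset_of_mem ⟨subset_rfl, hconv⟩
    rw [hhull] at hsub
    have : U = Set.univ := Set.eq_univ_of_univ_subset hsub
    rw [this, Set.ncard_univ] at hU1
    have : 1 < Nat.card (α × β) := Finite.one_lt_card
    omega
  exact le_antisymm (Nat.sInf_le h2M) (hlow _ (Nat.sInf_mem ⟨2, h2M⟩))
end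

section
/- Let G and H be nontrivial connected graphs. If S is a cycle convex set in G and T is a cycle convex set in H, then S × T is a cycle convex set in the Cartesian product G □ H. -/
open SimpleGraph

variable {V α β : Type*}

section Aux

variable {γ δ : Type*}

/-- Lift a walk whose support lies in `s` to the induced subgraph on `s`. -/
lemma lift_induce_walk {G : SimpleGraph γ} {s : Set γ} :
    ∀ {x y : γ} (p : G.Walk x y), (∀ z ∈ p.support, z ∈ s) → ∀ (hx : x ∈ s) (hy : y ∈ s),
      ∃ q : (G.induce s).Walk ⟨x, hx⟩ ⟨y, hy⟩,
        q.map (SimpleGraph.Embedding.induce s).toHom = p := by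
  intro x y p
  induction p with
  | nil => intro _ hx hy; exact ⟨.nil, rfl⟩
  | @cons x m y h p ih =>
    intro hp hx hy
    have hm : m ∈ s := hp m (by simp)
    obtain ⟨q, hq⟩ := ih (fun z hz => hp z (by simp [hz])) hm hy
    refine ⟨.cons (by exact h) q, ?_⟩
    subst hq; rfl

/-- Project a walk in the box product to the first coordinate, given that the
first coordinates of its support lie in `S`. -/
lemma proj_box_walk {G : SimpleGraph γ} {H : SimpleGraph δ} {S : Set γ} :
    ∀ {x y : γ × δ} (p : (G □ H).Walk x y), (∀ z ∈ p.support, z.1 ∈ S) →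
      ∃ q : G.Walk x.1 y.1, ∀ z ∈ q.support, z ∈ S := by
  intro x y p
  induction p with
  | nil =>
    intro h
    exact ⟨.nil, by intro z hz; simp at hz; subst hz; exact h _ (by simp)⟩
  | @cons x m y h p ih =>
    intro hs
    obtain ⟨q, hq⟩ := ih (fun z hz => hs z (by simp [hz]))
    rcases SimpleGraph.boxProd_adj.mp h with ⟨hG, _⟩ | ⟨_, hfst⟩
    · refine ⟨.cons hG q, ?_⟩
      intro z hz
      rcases (by simpa using hz : z = x.1 ∨ z ∈ q.support) with rfl | hz'
      · exact hs x (by simp)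
      · exact hq z hz'
    · exact ⟨q.copy hfst.symm rfl, by simpa using hq⟩

/-- Key lemma: if `S` is cycle convex in `G` and `a ∉ S`, there is no cycle in `G □ H`
based at `(a, b)` all of whose other vertices have first coordinate in `S`. -/
lemma no_box_cycle {G : SimpleGraph γ} {H : SimpleGraph δ} {S : Set γ}
    (hS : CycleConvex G S) {a : γ} {b : δ} (ha : a ∉ S)
    (c : (G □ H).Walk (a, b) (a, b)) (hc : c.IsCycle)
    (hsupp : ∀ z ∈ c.support, z ≠ (a, b) → z.1 ∈ S) : False := by
  cases c with
  | nil => exact hc.ne_nil rfl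
  | @cons _ u _ h p =>
    obtain ⟨hp, he⟩ := (Walk.cons_isCycle_iff p h).mp hc
    have hune : u ≠ (a, b) := (h.ne).symm
    have hu1S : u.1 ∈ S ∧ G.Adj a u.1 ∧ b = u.2 := by
      rcases SimpleGraph.boxProd_adj.mp h with ⟨hG, h2⟩ | ⟨_, h1⟩
      · exact ⟨hsupp u (by simp) hune, hG, h2⟩
      · exact absurd (show a ∈ S by rw [show a = u.1 from h1]; exact hsupp u (by simp) hune) ha
    -- decompose the end of p
    obtain ⟨v, h', r, hpr⟩ := Walk.exists_eq_cons_of_ne hune.symm p.reverse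
    · -- h' : (G □ H).Adj (a,b) v, r : Walk v u
      have hprp : p.reverse.IsPath := hp.reverse
      rw [hpr] at hprp
      have hrp : r.IsPath := hprp.of_cons
      have habr : (a, b) ∉ r.support := by
        have := (Walk.cons_isPath_iff h' r).mp hprp
        exact this.2
      have hvne : v ≠ (a, b) := fun hv => habr (hv ▸ r.start_mem_support)
      have hrsub : ∀ z ∈ r.support, z ∈ p.support := by
        intro z hz
        have : z ∈ p.reverse.support := by rw [hpr]; simp [hz]
        simpa [Walk.support_reverse] using this
      have hv1S : v.1 ∈ S ∧ G.Adj a v.1 ∧ b = v.2 := by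
        rcases SimpleGraph.boxProd_adj.mp h' with ⟨hG, h2⟩ | ⟨_, h1⟩
        · exact ⟨hsupp v (by simp [hrsub v r.start_mem_support]) hvne, hG, h2⟩
        · exact absurd (show a ∈ S by rw [show a = v.1 from h1]; exact hsupp v (by simp [hrsub v r.start_mem_support]) hvne) ha
      have huv : u ≠ v := by
        rintro rfl
        have : r = Walk.nil := Walk.isPath_iff_eq_nil.mp hrp
        subst this
        have hpe : p.edges = [s((a, b), u)] := by
          have := congrArg Walk.edges hpr
          rw [Walk.edges_reverse] at this
          have h2 : p.edges.reverse = [s((a, b), u)] := by simpa using this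
          simpa using congrArg List.reverse h2
        exact he (by rw [hpe]; simp)
      have huv1 : u.1 ≠ v.1 := by
        intro h1
        exact huv (Prod.ext h1 (hu1S.2.2 ▸ hv1S.2.2 ▸ rfl))
      have hrS : ∀ z ∈ r.support, z.1 ∈ S := fun z hz =>
        hsupp z (by simp [hrsub z hz]) (fun hzeq => habr (hzeq ▸ hz))
      obtain ⟨q, hqS⟩ := proj_box_walk r hrS
      classical
      obtain ⟨P, hPpath, hPS⟩ : ∃ P : G.Walk v.1 u.1, P.IsPath ∧ ∀ z ∈ P.support, z ∈ S :=
        ⟨q.toPath, q.toPath.2, fun z hz => hqS z (Walk.support_toPath_subset q hz)⟩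
      have haP : a ∉ P.support := fun hmem => ha (hPS a hmem)
      have hav : G.Adj a v.1 := hv1S.2.1
      have hua : G.Adj u.1 a := hu1S.2.1.symm
      set W : G.Walk a a := Walk.cons hav (P.concat hua) with hW
      have hWcyc : W.IsCycle := by
        rw [hW, Walk.cons_isCycle_iff]
        constructor
        · rw [Walk.isPath_def, Walk.support_concat]
          rw [List.nodup_append']
          refine ⟨hPpath.support_nodup, List.nodup_singleton a, ?_⟩
          intro x hx hxa
          simp only [List.mem_singleton] at hxa
          subst hxa
          exact haP hx
        · rw [Walk.edges_concat]
          rw [List.concat_eq_append, List.mem_append]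
          rintro (hmem | hmem)
          · exact ha (hPS a (Walk.fst_mem_support_of_mem_edges P hmem))
          · simp only [List.mem_singleton, Sym2.eq, Sym2.rel_iff', Prod.mk.injEq,
              Prod.swap_prod_mk] at hmem
            rcases hmem with ⟨rfl, _⟩ | ⟨_, h2⟩
            · exact ha hu1S.1
            · exact huv1 h2.symm
      have hWsupp : ∀ z ∈ W.support, z ∈ insert a S := by
        intro z hz
        rw [hW, Walk.support_cons, Walk.support_concat, List.mem_cons] at hz
        rcases hz with rfl | hz
        · exact Set.mem_insert _ _
        · rw [List.mem_append] at hz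
          rcases hz with hz | hz
          · exact Set.mem_insert_of_mem _ (hPS z hz)
          · simp at hz; subst hz; exact Set.mem_insert _ _
      obtain ⟨q', hq'⟩ := lift_induce_walk W hWsupp (Set.mem_insert a S) (Set.mem_insert a S)
      have hinj : Function.Injective
          ⇑((SimpleGraph.Embedding.induce (G := G) (insert a S)).toHom) :=
        fun x y hxy => Subtype.ext hxy
      have : q'.IsCycle := by
        rw [← Walk.map_isCycle_iff_of_injective hinj, hq']
        exact hWcyc
      exact hS a ha q' this

end Aux

theorem stmt_4 [Fintype α] [Fintype β] (G : SimpleGraph α) (H : SimpleGraph β)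
    [Nontrivial α] [Nontrivial β] (hG : G.Connected) (hH : H.Connected)
    (S : Set α) (T : Set β) (hS : CycleConvex G S) (hT : CycleConvex H T) :
    CycleConvex (G □ H) (S ×ˢ T) := by
  intro w hw c hc
  have hinj0 : Function.Injective
      ⇑((SimpleGraph.Embedding.induce (G := G □ H) (insert w (S ×ˢ T))).toHom) :=
    fun x y hxy => Subtype.ext hxy
  have hcm : (c.map (SimpleGraph.Embedding.induce (G := G □ H)
      (insert w (S ×ˢ T))).toHom).IsCycle := hc.map hinj0
  set c' := c.map (SimpleGraph.Embedding.induce (G := G □ H) (insert w (S ×ˢ T))).toHom with hc'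
  have hsupp : ∀ z ∈ c'.support, z = w ∨ z ∈ S ×ˢ T := by
    intro z hz
    rw [hc', Walk.support_map] at hz
    obtain ⟨z', _, rfl⟩ := List.mem_map.mp hz
    exact Set.mem_insert_iff.mp z'.2
  obtain ⟨a, b⟩ := w
  have hab : a ∉ S ∨ b ∉ T := by
    by_cases haS : a ∈ S
    · exact Or.inr fun hbT => hw ⟨haS, hbT⟩
    · exact Or.inl haS
  rcases hab with ha | hb
  · exact no_box_cycle hS ha c' hcm
      (fun z hz hne => (Set.mem_prod.mp ((hsupp z hz).resolve_left hne)).1)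
  · have hinj : Function.Injective (boxProdComm (G := G) (H := H)).toHom := fun x y hxy => by
      simpa using congrArg Prod.swap hxy
    have hcm2 : (c'.map (boxProdComm (G := G) (H := H)).toHom).IsCycle := hcm.map hinj
    refine no_box_cycle hT hb (c'.map (boxProdComm (G := G) (H := H)).toHom) hcm2 ?_
    intro z hz hne
    replace hz : z ∈ (c'.map (boxProdComm (G := G) (H := H)).toHom).support := hz
    rw [Walk.support_map] at hz
    obtain ⟨z', hz', rfl⟩ := List.mem_map.mp hz
    have : z' ≠ (a, b) := fun h => hne (by rw [h]; rfl)
    exact (Set.mem_prod.mp ((hsupp z' hz').resolve_left this)).2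
end

section
/- Let G and H be nontrivial connected graphs with hn_cc(H) = 2. Then hn_cc(G) ≤ hn_cc(G □ H) ≤ hn_cc(G) + 1. -/
open SimpleGraph

variable {V α β : Type*}

lemma subset_cycleHull (G : SimpleGraph V) (S : Set V) : S ⊆ cycleHull G S :=
  fun _x hx _T hT => hT.1 hx

lemma cycleHull_subset {G : SimpleGraph V} {S T : Set V} (hST : S ⊆ T)
    (hT : CycleConvex G T) : cycleHull G S ⊆ T :=
  Set.sInter_subset_of_mem ⟨hST, hT⟩

/-- generic hom between induced subgraphs -/
def mapInduceHom {W : Type*} {G : SimpleGraph V} {G' : SimpleGraph W} (f : V → W)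
    (hadj : ∀ {a b}, G.Adj a b → G'.Adj (f a) (f b)) {A : Set V} {B : Set W}
    (hAB : ∀ a ∈ A, f a ∈ B) : G.induce A →g G'.induce B where
  toFun x := ⟨f x.val, hAB _ x.prop⟩
  map_rel' h := by
    simp only [comap_adj, Function.Embedding.coe_subtype] at h ⊢
    exact hadj h

lemma mapInduceHom_injective {W : Type*} {G : SimpleGraph V} {G' : SimpleGraph W} {f : V → W}
    {hadj : ∀ {a b}, G.Adj a b → G'.Adj (f a) (f b)} {A : Set V} {B : Set W}
    {hAB : ∀ a ∈ A, f a ∈ B} (hf : Function.Injective f) :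
    Function.Injective (mapInduceHom f hadj hAB) := by
  intro x y h
  exact Subtype.ext (hf (congrArg Subtype.val h))

lemma cycleConvex_cycleHull (G : SimpleGraph V) (S : Set V) :
    CycleConvex G (cycleHull G S) := by
  intro w hw c hc
  simp only [cycleHull, Set.mem_sInter, not_forall] at hw
  obtain ⟨T, ⟨hST, hT⟩, hwT⟩ := hw
  have hsub : cycleHull G S ⊆ T := cycleHull_subset hST hT
  have hsub' : insert w (cycleHull G S) ⊆ insert w T := Set.insert_subset_insert hsub
  let f : G.induce (insert w (cycleHull G S)) →g G.induce (insert w T) :=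
    mapInduceHom id (fun h => h) (fun a ha => hsub' ha)
  exact hT w hwT (c.map f) (hc.map (mapInduceHom_injective (fun _ _ h => h)))

lemma cycleConvex_empty (G : SimpleGraph V) : CycleConvex G (∅ : Set V) := by
  intro w _ c hc
  cases c with
  | nil => exact hc.ne_nil rfl
  | @cons _ x _ h p =>
    have hx : x.val = w := by
      have := x.prop
      simp only [Set.mem_insert_iff, Set.mem_empty_iff_false, or_false] at this
      exact this
    have h2 : G.Adj w x.val := by simpa [comap_adj] using h
    exact G.irrefl (hx ▸ h2)

lemma cycleHull_univ_eq (G : SimpleGraph V) : cycleHull G (Set.univ : Set V) = Set.univ :=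
  Set.eq_univ_of_univ_subset (subset_cycleHull _ _)

lemma proj_reach {G : SimpleGraph α} {H : SimpleGraph β} {A : Set (α × β)} {C : Set α}
    {x y : ↑A} (q : ((G □ H).induce A).Walk x y)
    (hsup : ∀ v ∈ q.support, (v : α × β).1 ∈ C) :
    ∀ (hx : x.val.1 ∈ C) (hy : y.val.1 ∈ C),
      (G.induce C).Reachable ⟨x.val.1, hx⟩ ⟨y.val.1, hy⟩ := by
  induction q with
  | nil => intro hx hy; exact Reachable.refl _
  | @cons u z v h q ih =>
    intro hx hy
    have hz : (z : α × β).1 ∈ C := hsup z (by simp)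
    have hsup' : ∀ v ∈ q.support, (v : α × β).1 ∈ C := fun v hv => hsup v (by simp [hv])
    have h' : (G □ H).Adj u.val z.val := by simpa [comap_adj] using h
    rcases h' with ⟨hGadj, -⟩ | ⟨-, hfst⟩
    · have hadj : (G.induce C).Adj ⟨u.val.1, hx⟩ ⟨z.val.1, hz⟩ := by
        simp only [comap_adj, Function.Embedding.coe_subtype]
        exact hGadj
      exact (hadj.reachable).trans (ih hsup' hz hy)
    · have : (⟨u.val.1, hx⟩ : ↑C) = ⟨z.val.1, hz⟩ := Subtype.ext hfst
      rw [this]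
      exact ih hsup' hz hy

lemma cycleConvex_prod_univ {G : SimpleGraph α} {H : SimpleGraph β} {C : Set α}
    (hC : CycleConvex G C) : CycleConvex (G □ H) (C ×ˢ (Set.univ : Set β)) := by
  classical
  intro w hw c hc
  have ha : w.1 ∉ C := fun h => hw ⟨h, Set.mem_univ _⟩
  set A : Set (α × β) := insert w (C ×ˢ (Set.univ : Set β)) with hA
  -- membership fact
  have hmem : ∀ v : ↑A, v.val ≠ w → v.val.1 ∈ C := by
    intro v hvw
    have := v.prop
    simp only [hA, Set.mem_insert_iff, Set.mem_prod] at this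
    rcases this with h | h
    · exact absurd h hvw
    · exact h.1
  cases c with
  | nil => exact hc.ne_nil rfl
  | @cons _ x _ hwx p =>
    rw [Walk.cons_isCycle_iff] at hc
    obtain ⟨hp, hew⟩ := hc
    -- decompose p from the end
    obtain ⟨y, q, hyw, hpq⟩ : ∃ (y : ↑A) (q : ((G □ H).induce A).Walk x y)
        (hyw : ((G □ H).induce A).Adj y ⟨w, Set.mem_insert w _⟩), p = q.concat hyw := by
      cases p with
      | nil => exact absurd rfl hwx.ne'
      | cons h' p' => exact Walk.exists_cons_eq_concat h' p'
    rw [hpq] at hp hew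
    -- y is not w
    have hyne : y ≠ (⟨w, Set.mem_insert w _⟩ : ↑A) := hyw.ne
    have hxne : x ≠ (⟨w, Set.mem_insert w _⟩ : ↑A) := hwx.ne'
    -- path facts
    rw [Walk.isPath_def, Walk.support_concat] at hp
    simp only [List.concat_eq_append, List.nodup_append, List.nodup_cons, List.not_mem_nil,
      not_false_iff, List.nodup_nil, and_true, List.mem_singleton, true_and] at hp
    have hqnd : q.support.Nodup := hp.1
    have hwq : (⟨w, Set.mem_insert w _⟩ : ↑A) ∉ q.support := by
      intro hmem'
      exact hp.2 _ hmem' _ rfl rfl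
    -- x ≠ y
    have hxy : x ≠ y := by
      intro hxyeq
      apply hew
      rw [Walk.edges_concat]
      subst hxyeq
      simp [List.concat_eq_append, Sym2.eq_swap]
    -- memberships in C
    have hx1 : x.val.1 ∈ C := hmem x (fun h => hxne (Subtype.ext h))
    have hy1 : y.val.1 ∈ C := hmem y (fun h => hyne (Subtype.ext h))
    -- adjacency analysis
    have hwx' : (G □ H).Adj w x.val := by simpa [comap_adj] using hwx
    have hyw' : (G □ H).Adj y.val w := by simpa [comap_adj] using hyw
    obtain ⟨hGx, hsx⟩ : G.Adj w.1 x.val.1 ∧ w.2 = x.val.2 := by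
      rcases hwx' with h | ⟨-, h⟩
      · exact h
      · exact absurd (h ▸ hx1) ha
    obtain ⟨hGy, hsy⟩ : G.Adj y.val.1 w.1 ∧ y.val.2 = w.2 := by
      rcases hyw' with h | ⟨-, h⟩
      · exact h
      · exact absurd (h.symm ▸ hy1) ha
    have ha12 : x.val.1 ≠ y.val.1 := by
      intro h
      exact hxy (Subtype.ext (Prod.ext h (hsx.symm.trans hsy.symm)))
    -- all of q's support lies over C
    have hsupq : ∀ v ∈ q.support, (v : α × β).1 ∈ C := by
      intro v hv
      refine hmem v (fun h => hwq ?_)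
      have : v = (⟨w, Set.mem_insert w _⟩ : ↑A) := Subtype.ext h
      exact this ▸ hv
    obtain ⟨pw⟩ := proj_reach q hsupq hx1 hy1
    -- lift path to insert w.1 C
    let f : G.induce C →g G.induce (insert w.1 C) :=
      mapInduceHom id (fun h => h) (fun a haC => Set.mem_insert_of_mem _ haC)
    have finj : Function.Injective f := mapInduceHom_injective (fun _ _ h => h)
    let pc : (G.induce (insert w.1 C)).Walk ⟨x.val.1, Set.mem_insert_of_mem _ hx1⟩
        ⟨y.val.1, Set.mem_insert_of_mem _ hy1⟩ := Walk.map f pw.toPath.val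
    have pcpath : pc.IsPath := Walk.map_isPath_of_injective finj pw.toPath.prop
    have pcsup : ∀ v ∈ pc.support, (v : α) ∈ C := by
      intro v hv
      rw [show pc.support = (pw.toPath.val).support.map f from Walk.support_map _ _, List.mem_map] at hv
      obtain ⟨u, -, rfl⟩ := hv
      exact u.prop
    have hwpc : (⟨w.1, Set.mem_insert w.1 C⟩ : ↑(insert w.1 C)) ∉ pc.support := by
      intro hmem'
      exact ha (pcsup _ hmem')
    -- adjacencies for the surgery cycle
    have e1 : (G.induce (insert w.1 C)).Adj ⟨w.1, Set.mem_insert w.1 C⟩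
        ⟨x.val.1, Set.mem_insert_of_mem _ hx1⟩ := by
      simp only [comap_adj, Function.Embedding.coe_subtype]
      exact hGx
    have e2 : (G.induce (insert w.1 C)).Adj ⟨y.val.1, Set.mem_insert_of_mem _ hy1⟩
        ⟨w.1, Set.mem_insert w.1 C⟩ := by
      simp only [comap_adj, Function.Embedding.coe_subtype]
      exact hGy
    have hcyc : (Walk.cons e1 (pc.concat e2)).IsCycle := by
      rw [Walk.cons_isCycle_iff]
      constructor
      · rw [Walk.isPath_def, Walk.support_concat]
        simp only [List.concat_eq_append, List.nodup_append, List.nodup_cons, List.not_mem_nil,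
          not_false_iff, List.nodup_nil, and_true, List.mem_singleton, true_and]
        refine ⟨pcpath.support_nodup, ?_⟩
        intro a hamem haw hb hab
        rw [hab, hb] at hamem
        exact hwpc hamem
      · rw [Walk.edges_concat]
        simp only [List.concat_eq_append, List.mem_append, List.mem_singleton, not_or]
        constructor
        · intro hmem'
          exact hwpc (Walk.fst_mem_support_of_mem_edges _ hmem')
        · intro heq
          rw [Sym2.eq_iff] at heq
          rcases heq with ⟨h1, -⟩ | ⟨-, h2⟩
          · have : w.1 = y.val.1 := Subtype.ext_iff.mp h1
            exact ha (this ▸ hy1)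
          · exact ha12 (congrArg Subtype.val h2)
    exact hC w.1 ha _ hcyc

lemma four_step {G : SimpleGraph α} {H : SimpleGraph β} {D : Set (α × β)}
    (hconv : CycleConvex (G □ H) D) {u u' : α} {b b' : β}
    (huu : G.Adj u u') (hbb : H.Adj b b')
    (h1 : (u, b) ∈ D) (h2 : (u, b') ∈ D) (h3 : (u', b) ∈ D) : (u', b') ∈ D := by
  by_contra hw
  set w : α × β := (u', b') with hwdef
  set A : Set (α × β) := insert w D with hA
  have m0 : w ∈ A := Set.mem_insert w D
  have m1 : (u, b') ∈ A := Set.mem_insert_of_mem _ h2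
  have m2 : (u, b) ∈ A := Set.mem_insert_of_mem _ h1
  have m3 : (u', b) ∈ A := Set.mem_insert_of_mem _ h3
  have hu : u ≠ u' := huu.ne
  have hb : b ≠ b' := hbb.ne
  have e1 : ((G □ H).induce A).Adj ⟨w, m0⟩ ⟨(u, b'), m1⟩ := by
    simp only [comap_adj, Function.Embedding.coe_subtype]
    exact Or.inl ⟨huu.symm, rfl⟩
  have e2 : ((G □ H).induce A).Adj ⟨(u, b'), m1⟩ ⟨(u, b), m2⟩ := by
    simp only [comap_adj, Function.Embedding.coe_subtype]
    exact Or.inr ⟨hbb.symm, rfl⟩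
  have e3 : ((G □ H).induce A).Adj ⟨(u, b), m2⟩ ⟨(u', b), m3⟩ := by
    simp only [comap_adj, Function.Embedding.coe_subtype]
    exact Or.inl ⟨huu, rfl⟩
  have e4 : ((G □ H).induce A).Adj ⟨(u', b), m3⟩ ⟨w, m0⟩ := by
    simp only [comap_adj, Function.Embedding.coe_subtype]
    exact Or.inr ⟨hbb, rfl⟩
  have hcyc : (Walk.cons e1 (Walk.cons e2 (Walk.cons e3 (Walk.cons e4 Walk.nil)))).IsCycle := by
    rw [Walk.cons_isCycle_iff]
    constructor
    · rw [Walk.isPath_def]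
      simp only [Walk.support_cons, Walk.support_nil, List.nodup_cons, List.mem_cons,
        List.mem_singleton, List.not_mem_nil, or_false, not_or, List.nodup_nil, and_true,
        Subtype.mk.injEq, Prod.mk.injEq, hwdef]
      refine ⟨⟨?_, ?_, ?_⟩, ⟨?_, ?_⟩, ?_⟩ <;> tauto
    · simp only [Walk.edges_cons, Walk.edges_nil, List.mem_cons, List.not_mem_nil, or_false,
        Sym2.eq_iff, Subtype.mk.injEq, Prod.mk.injEq, hwdef]
      push_neg
      refine ⟨?_, ?_, ?_⟩ <;> tauto
  exact hconv w hw _ hcyc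

lemma row_convex {G : SimpleGraph α} {H : SimpleGraph β} {D : Set (α × β)}
    (hconv : CycleConvex (G □ H) D) (b : β) :
    CycleConvex G {u : α | (u, b) ∈ D} := by
  intro w hw c hc
  let f : G.induce (insert w {u : α | (u, b) ∈ D}) →g (G □ H).induce (insert (w, b) D) :=
    mapInduceHom (fun u => (u, b)) (fun h => Or.inl ⟨h, rfl⟩)
      (by
        intro a ha
        rcases ha with rfl | ha
        · exact Set.mem_insert _ _
        · exact Set.mem_insert_of_mem _ ha)
  have finj : Function.Injective f :=
    mapInduceHom_injective (fun a a' h => (Prod.ext_iff.mp h).1)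
  exact hconv (w, b) hw (c.map f) (hc.map finj)

lemma col_convex {G : SimpleGraph α} {H : SimpleGraph β} {D : Set (α × β)}
    (hconv : CycleConvex (G □ H) D) (u : α) :
    CycleConvex H {b : β | (u, b) ∈ D} := by
  intro w hw c hc
  let f : H.induce (insert w {b : β | (u, b) ∈ D}) →g (G □ H).induce (insert (u, w) D) :=
    mapInduceHom (fun b => (u, b)) (fun h => Or.inr ⟨h, rfl⟩)
      (by
        intro a ha
        rcases ha with rfl | ha
        · exact Set.mem_insert _ _
        · exact Set.mem_insert_of_mem _ ha)
  have finj : Function.Injective f :=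
    mapInduceHom_injective (fun a a' h => (Prod.ext_iff.mp h).2)
  exact hconv (u, w) hw (c.map f) (hc.map finj)

lemma hull_prod_univ {G : SimpleGraph α} {H : SimpleGraph β} (hG : G.Connected)
    (hH : H.Connected) {SG : Set α} (hSG : cycleHull G SG = Set.univ) {b1 b2 : β}
    (hSH : cycleHull H {b1, b2} = Set.univ) {u0 : α} (hu0 : u0 ∈ SG) :
    cycleHull (G □ H) ((fun u => (u, b1)) '' SG ∪ {(u0, b2)}) = Set.univ := by
  set A : Set (α × β) := (fun u => (u, b1)) '' SG ∪ {(u0, b2)} with hAdef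
  set D : Set (α × β) := cycleHull (G □ H) A with hDdef
  have hDconv : CycleConvex (G □ H) D := cycleConvex_cycleHull _ _
  have hAD : A ⊆ D := subset_cycleHull _ _
  have row1 : ∀ u, (u, b1) ∈ D := by
    have hSGR : SG ⊆ {u : α | (u, b1) ∈ D} := fun u hu => hAD (Or.inl ⟨u, hu, rfl⟩)
    have hsub := cycleHull_subset hSGR (row_convex hDconv b1)
    rw [hSG] at hsub
    exact fun u => hsub (Set.mem_univ u)
  have colu0 : ∀ b, (u0, b) ∈ D := by
    have hsub2 : ({b1, b2} : Set β) ⊆ {b : β | (u0, b) ∈ D} := by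
      intro b hb
      rcases hb with rfl | hb
      · exact row1 u0
      · rw [Set.mem_singleton_iff] at hb
        subst hb
        exact hAD (Or.inr rfl)
    have hsub := cycleHull_subset hsub2 (col_convex hDconv u0)
    rw [hSH] at hsub
    exact fun b => hsub (Set.mem_univ b)
  have spread : ∀ u u', G.Adj u u' → (∀ b, (u, b) ∈ D) → ∀ b, (u', b) ∈ D := by
    intro u u' huu' hu b
    have key : ∀ {b0 bb : β}, H.Walk b0 bb → (u', b0) ∈ D → (u', bb) ∈ D := by
      intro b0 bb p
      induction p with
      | nil => exact id
      | cons h q ih => exact fun h0 => ih (four_step hDconv huu' h (hu _) (hu _) h0)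
    exact (hH.preconnected b1 b).elim (fun p => key p (row1 u'))
  have main : ∀ u b, (u, b) ∈ D := by
    have key : ∀ {v v' : α}, G.Walk v v' → (∀ b, (v, b) ∈ D) → ∀ b, (v', b) ∈ D := by
      intro v v' p
      induction p with
      | nil => exact id
      | cons h q ih => exact fun h0 => ih (spread _ _ h h0)
    intro u b
    exact (hG.preconnected u0 u).elim (fun p => key p colu0) b
  apply Set.eq_univ_of_forall
  intro x
  cases x with
  | mk u b => exact main u b

theorem stmt_8 [Fintype α] [Fintype β] (G : SimpleGraph α) (H : SimpleGraph β)
    [Nontrivial α] [Nontrivial β] (hG : G.Connected) (hH : H.Connected)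
    (hH2 : cycleHullNumber H = 2) :
    cycleHullNumber G ≤ cycleHullNumber (G □ H) ∧
    cycleHullNumber (G □ H) ≤ cycleHullNumber G + 1 := by
  classical
  constructor
  · have hne : {n : ℕ | ∃ S : Set (α × β), S.ncard = n ∧
        cycleHull (G □ H) S = Set.univ}.Nonempty :=
      ⟨(Set.univ : Set (α × β)).ncard, Set.univ, rfl, cycleHull_univ_eq _⟩
    obtain ⟨S, hScard, hShull⟩ := Nat.sInf_mem hne
    have himg : cycleHull G (Prod.fst '' S) = Set.univ := by
      have hconv : CycleConvex (G □ H)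
          ((cycleHull G (Prod.fst '' S)) ×ˢ (Set.univ : Set β)) :=
        cycleConvex_prod_univ (cycleConvex_cycleHull _ _)
      have hsub : S ⊆ (cycleHull G (Prod.fst '' S)) ×ˢ (Set.univ : Set β) := fun p hp =>
        ⟨subset_cycleHull _ _ ⟨p, hp, rfl⟩, Set.mem_univ _⟩
      have h2 := cycleHull_subset hsub hconv
      rw [hShull] at h2
      apply Set.eq_univ_of_forall
      intro a
      obtain ⟨b⟩ : Nonempty β := inferInstance
      exact (h2 (Set.mem_univ (a, b))).1
    calc cycleHullNumber G ≤ (Prod.fst '' S).ncard := Nat.sInf_le ⟨_, rfl, himg⟩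
      _ ≤ S.ncard := Set.ncard_image_le (Set.toFinite S)
      _ = _ := hScard
  · have hneH : {n : ℕ | ∃ S : Set β, S.ncard = n ∧ cycleHull H S = Set.univ}.Nonempty :=
      ⟨(Set.univ : Set β).ncard, Set.univ, rfl, cycleHull_univ_eq _⟩
    obtain ⟨SH, hSHcard, hSHhull⟩ := Nat.sInf_mem hneH
    rw [show sInf {n : ℕ | ∃ S : Set β, S.ncard = n ∧ cycleHull H S = Set.univ} =
      cycleHullNumber H from rfl, hH2] at hSHcard
    obtain ⟨b1, b2, hb12, rfl⟩ := Set.ncard_eq_two.mp hSHcard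
    have hneG : {n : ℕ | ∃ S : Set α, S.ncard = n ∧ cycleHull G S = Set.univ}.Nonempty :=
      ⟨(Set.univ : Set α).ncard, Set.univ, rfl, cycleHull_univ_eq _⟩
    obtain ⟨SG, hSGcard, hSGhull⟩ := Nat.sInf_mem hneG
    have hSGne : SG.Nonempty := by
      rw [Set.nonempty_iff_ne_empty]
      rintro rfl
      have := cycleHull_subset (Set.Subset.refl (∅ : Set α)) (cycleConvex_empty G)
      rw [hSGhull] at this
      obtain ⟨a⟩ : Nonempty α := inferInstance
      exact this (Set.mem_univ a)
    obtain ⟨u0, hu0⟩ := hSGne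
    have hAhull := hull_prod_univ hG hH hSGhull hSHhull hu0
    have hcard : ((fun u => (u, b1)) '' SG ∪ {(u0, b2)}).ncard ≤ SG.ncard + 1 := by
      refine le_trans (Set.ncard_union_le _ _) ?_
      rw [Set.ncard_image_of_injective _ (fun a a' h => (Prod.ext_iff.mp h).1),
        Set.ncard_singleton]
    calc cycleHullNumber (G □ H) ≤ ((fun u => (u, b1)) '' SG ∪ {(u0, b2)}).ncard :=
          Nat.sInf_le ⟨_, rfl, hAhull⟩
      _ ≤ SG.ncard + 1 := hcard
      _ = cycleHullNumber G + 1 := by rw [hSGcard]; rfl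
end

section
/- For any two nontrivial trees T₁ and T₂ with m and n vertices respectively, the cycle hull number of the Cartesian product T₁ □ T₂ equals m + n − 1. -/
open SimpleGraph

variable {V α β : Type*}

section MyAux

open SimpleGraph

section Helpers

variable {X : Type*} {H : SimpleGraph X}

lemma walk_color (P : X → Prop) :
    ∀ {x y : X} (p : H.Walk x y), ¬(P x ↔ P y) →
      ∃ a b, H.Adj a b ∧ a ∈ p.support ∧ b ∈ p.support ∧ ¬(P a ↔ P b) := by
  intro x y p
  induction p with
  | nil => intro h; exact absurd Iff.rfl h
  | @cons u v z h p ih =>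
    intro hxy
    by_cases huv : P u ↔ P v
    · obtain ⟨a, b, hab, ha, hb, hPab⟩ := ih (by tauto)
      exact ⟨a, b, hab, by simp [Walk.support_cons, ha],
        by simp [Walk.support_cons, hb], hPab⟩
    · exact ⟨u, v, h, by simp [Walk.support_cons],
        by simp [Walk.support_cons, Walk.start_mem_support], huv⟩

lemma exists_parent (hc : H.Connected) {x r : X} (hx : x ≠ r) :
    ∃ y, H.Adj x y ∧ H.dist y r + 1 = H.dist x r := by
  obtain ⟨p, hp⟩ := hc.exists_walk_length_eq_dist x r
  have hpos : 0 < H.dist x r := hc.pos_dist_of_ne hx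
  cases p with
  | nil => exact absurd rfl hx
  | @cons _ y _ h q =>
    refine ⟨y, h, ?_⟩
    have h1 : H.dist y r ≤ q.length := SimpleGraph.dist_le q
    obtain ⟨q', hq'⟩ := hc.exists_walk_length_eq_dist y r
    have h2 : H.dist x r ≤ (Walk.cons h q').length := SimpleGraph.dist_le _
    rw [Walk.length_cons] at h2
    rw [Walk.length_cons] at hp
    omega

end Helpers


open SimpleGraph

variable {α β : Type*}

/-- auxiliary relation on lines -/
def RelCC (T : Set (α × β)) : (α ⊕ β) → (α ⊕ β) → Prop :=
  fun i j => ∃ p ∈ T, i = Sum.inl p.1 ∧ j = Sum.inr p.2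

lemma chainCC {T₁ : SimpleGraph α} {T₂ : SimpleGraph β} {W T : Set (α × β)} :
    ∀ {x y : W} (p : ((T₁ □ T₂).induce W).Walk x y),
      (∀ z ∈ p.support, (z : α × β) ∈ T) →
      Relation.EqvGen (RelCC T) (Sum.inl (x : α × β).1) (Sum.inl (y : α × β).1) := by
  intro x y p
  induction p with
  | nil => intro _; exact Relation.EqvGen.refl _
  | @cons u v z h p ih =>
    intro hsupp
    have huT : (u : α × β) ∈ T := hsupp u (by simp [Walk.support_cons])
    have hvT : (v : α × β) ∈ T := hsupp v (by simp [Walk.support_cons, Walk.start_mem_support])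
    have ihv := ih (fun z hz => hsupp z (by simp [Walk.support_cons, hz]))
    have hadj : (T₁ □ T₂).Adj (u : α × β) (v : α × β) := h
    rw [boxProd_adj] at hadj
    rcases hadj with ⟨_, h2⟩ | ⟨_, h1⟩
    · -- second coordinates equal
      refine Relation.EqvGen.trans _ _ _ ?_ ihv
      refine Relation.EqvGen.trans _ _ _
        (Relation.EqvGen.rel _ _ ⟨(u : α × β), huT, rfl, rfl⟩) ?_
      rw [h2]
      exact Relation.EqvGen.symm _ _ (Relation.EqvGen.rel _ _ ⟨(v : α × β), hvT, rfl, rfl⟩)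
    · rw [h1]; exact ihv

lemma eqvGen_mono {T T' : Set (α × β)}
    (h : ∀ p ∈ T, Relation.EqvGen (RelCC T') (Sum.inl p.1) (Sum.inr p.2)) :
    ∀ {i j}, Relation.EqvGen (RelCC T) i j → Relation.EqvGen (RelCC T') i j := by
  intro i j hij
  induction hij with
  | rel x y hxy => obtain ⟨p, hp, rfl, rfl⟩ := hxy; exact h p hp
  | refl x => exact Relation.EqvGen.refl x
  | symm x y _ ih => exact Relation.EqvGen.symm _ _ ih
  | trans x y z _ _ ih1 ih2 => exact Relation.EqvGen.trans _ _ _ ih1 ih2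

lemma keyCC {T₁ : SimpleGraph α} {T₂ : SimpleGraph β}
    (ht1 : T₁.IsAcyclic) (ht2 : T₂.IsAcyclic)
    (T : Set (α × β)) (w : α × β) (hw : w ∉ T)
    (c : ((T₁ □ T₂).induce (insert w T)).Walk ⟨w, Set.mem_insert w T⟩ ⟨w, Set.mem_insert w T⟩)
    (hc : c.IsCycle) :
    (∃ x ∈ T, x.1 = w.1) ∧ (∃ y ∈ T, y.2 = w.2) ∧
      Relation.EqvGen (RelCC T) (Sum.inl w.1) (Sum.inr w.2) := by
  classical
  set w₀ : ↥(insert w T) := ⟨w, Set.mem_insert w T⟩ with hw₀def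
  obtain ⟨n₁, h₁, q, hcq⟩ := Walk.not_nil_iff.mp hc.not_nil
  subst hcq
  rw [Walk.isCycle_def] at hc
  obtain ⟨htrail, hnil, hnd⟩ := hc
  obtain ⟨n₂, h₂, q₂, hq⟩ := q.reverse.exists_eq_cons_of_ne h₁.ne
  have hsup : q.support = q₂.support.reverse ++ [w₀] := by
    have h := congrArg Walk.support hq
    rw [Walk.support_reverse, Walk.support_cons] at h
    have h' := congrArg List.reverse h
    rw [List.reverse_reverse] at h'
    rw [h', List.reverse_cons]
  have hndq : q.support.Nodup := by simpa [Walk.support_cons] using hnd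
  have hw₀q₂ : w₀ ∉ q₂.support ∧ q₂.support.Nodup := by
    rw [hsup] at hndq
    simp only [List.nodup_append, List.nodup_reverse, List.nodup_cons] at hndq
    refine ⟨fun hmem => ?_, hndq.1⟩
    exact hndq.2.2 _ (List.mem_reverse.mpr hmem) _ (List.mem_singleton_self _) rfl
  have valT : ∀ z : ↥(insert w T), z ∈ q₂.support → (z : α × β) ∈ T := by
    intro z hz
    rcases z.2 with hz' | hz'
    · exfalso
      apply hw₀q₂.1
      have hzw : z = w₀ := Subtype.ext hz'
      rwa [hzw] at hz
    · exact hz'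
  have hn₁mem : n₁ ∈ q₂.support := Walk.end_mem_support q₂
  have hn₂mem : n₂ ∈ q₂.support := Walk.start_mem_support q₂
  have hedge : s(w₀, n₂) ∈ q.edges := by
    have h := congrArg Walk.edges hq
    rw [Walk.edges_reverse, Walk.edges_cons] at h
    have hmem : s(w₀, n₂) ∈ q.edges.reverse := by rw [h]; simp [hw₀def]
    simpa using hmem
  have hne12 : n₁ ≠ n₂ := by
    intro e
    subst e
    have hnodup : (Walk.cons h₁ q).edges.Nodup := htrail.edges_nodup
    rw [Walk.edges_cons, List.nodup_cons] at hnodup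
    exact hnodup.1 hedge
  -- Claim A': some vertex on q₂ has first coordinate w.1
  have hA' : ∃ x : ↥(insert w T), x ∈ q₂.support ∧ (x : α × β).1 = w.1 := by
    by_contra hA
    push_neg at hA
    have hn₁t : T₁.Adj w.1 (n₁ : α × β).1 ∧ w.2 = (n₁ : α × β).2 := by
      have hadj : (T₁ □ T₂).Adj w (n₁ : α × β) := h₁
      rw [boxProd_adj] at hadj
      rcases hadj with h | h
      · exact ⟨h.1, h.2⟩
      · exact absurd h.2.symm (hA n₁ hn₁mem)
    have hn₂t : T₁.Adj w.1 (n₂ : α × β).1 ∧ w.2 = (n₂ : α × β).2 := by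
      have hadj : (T₁ □ T₂).Adj w (n₂ : α × β) := h₂
      rw [boxProd_adj] at hadj
      rcases hadj with h | h
      · exact ⟨h.1, h.2⟩
      · exact absurd h.2.symm (hA n₂ hn₂mem)
    set u₁ := (n₁ : α × β).1
    set u₂ := (n₂ : α × β).1
    have hu12 : u₁ ≠ u₂ := by
      intro e
      apply hne12
      apply Subtype.ext
      exact Prod.ext e (hn₁t.2.symm.trans hn₂t.2)
    set P : ↥(insert w T) → Prop :=
      fun z => (T₁ \ fromEdgeSet {s(w.1, u₁)}).Reachable w.1 (z : α × β).1 with hP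
    have hPn₁ : ¬ P n₁ := by
      have hb := (isAcyclic_iff_forall_adj_isBridge.mp ht1) hn₁t.1
      rw [isBridge_iff] at hb
      exact hb
    have hPn₂ : P n₂ := by
      have : (T₁ \ fromEdgeSet {s(w.1, u₁)}).Adj w.1 u₂ := by
        rw [sdiff_adj, fromEdgeSet_adj]
        refine ⟨hn₂t.1, ?_⟩
        rintro ⟨h', -⟩
        rw [Set.mem_singleton_iff, Sym2.eq_iff] at h'
        rcases h' with ⟨-, e⟩ | ⟨e1, e2⟩
        · exact hu12 e.symm
        · exact hn₁t.1.ne e1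
      exact this.reachable
    obtain ⟨x, y, hxy, hxs, hys, hPxy⟩ := walk_color P q₂ (by tauto)
    have hadj : (T₁ □ T₂).Adj (x : α × β) (y : α × β) := hxy
    rw [boxProd_adj] at hadj
    rcases hadj with h | h
    · -- first coordinates adjacent in T₁
      by_cases he : s((x : α × β).1, (y : α × β).1) = s(w.1, u₁)
      · rw [Sym2.eq_iff] at he
        rcases he with ⟨e1, -⟩ | ⟨-, e2⟩
        · exact hA x hxs e1
        · exact hA y hys e2
      · apply hPxy
        have hadj' : (T₁ \ fromEdgeSet {s(w.1, u₁)}).Adj (x : α × β).1 (y : α × β).1 := by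
          rw [sdiff_adj, fromEdgeSet_adj]
          refine ⟨h.1, ?_⟩
          rintro ⟨h', -⟩
          exact he (by simpa using h')
        exact ⟨fun hp => hp.trans hadj'.reachable, fun hp => hp.trans hadj'.symm.reachable⟩
    · -- first coordinates equal
      exact hPxy (by simp only [hP, h.2])
  -- Claim B': some vertex on q₂ has second coordinate w.2
  have hB' : ∃ y : ↥(insert w T), y ∈ q₂.support ∧ (y : α × β).2 = w.2 := by
    by_contra hB
    push_neg at hB
    have hn₁t : T₂.Adj w.2 (n₁ : α × β).2 ∧ w.1 = (n₁ : α × β).1 := by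
      have hadj : (T₁ □ T₂).Adj w (n₁ : α × β) := h₁
      rw [boxProd_adj] at hadj
      rcases hadj with h | h
      · exact absurd h.2.symm (hB n₁ hn₁mem)
      · exact ⟨h.1, h.2⟩
    have hn₂t : T₂.Adj w.2 (n₂ : α × β).2 ∧ w.1 = (n₂ : α × β).1 := by
      have hadj : (T₁ □ T₂).Adj w (n₂ : α × β) := h₂
      rw [boxProd_adj] at hadj
      rcases hadj with h | h
      · exact absurd h.2.symm (hB n₂ hn₂mem)
      · exact ⟨h.1, h.2⟩
    set v₁ := (n₁ : α × β).2
    set v₂ := (n₂ : α × β).2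
    have hv12 : v₁ ≠ v₂ := by
      intro e
      apply hne12
      apply Subtype.ext
      exact Prod.ext (hn₁t.2.symm.trans hn₂t.2) e
    set P : ↥(insert w T) → Prop :=
      fun z => (T₂ \ fromEdgeSet {s(w.2, v₁)}).Reachable w.2 (z : α × β).2 with hP
    have hPn₁ : ¬ P n₁ := by
      have hb := (isAcyclic_iff_forall_adj_isBridge.mp ht2) hn₁t.1
      rw [isBridge_iff] at hb
      exact hb
    have hPn₂ : P n₂ := by
      have : (T₂ \ fromEdgeSet {s(w.2, v₁)}).Adj w.2 v₂ := by
        rw [sdiff_adj, fromEdgeSet_adj]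
        refine ⟨hn₂t.1, ?_⟩
        rintro ⟨h', -⟩
        rw [Set.mem_singleton_iff, Sym2.eq_iff] at h'
        rcases h' with ⟨-, e⟩ | ⟨e1, e2⟩
        · exact hv12 e.symm
        · exact hn₁t.1.ne e1
      exact this.reachable
    obtain ⟨x, y, hxy, hxs, hys, hPxy⟩ := walk_color P q₂ (by tauto)
    have hadj : (T₁ □ T₂).Adj (x : α × β) (y : α × β) := hxy
    rw [boxProd_adj] at hadj
    rcases hadj with h | h
    · exact hPxy (by simp only [hP, h.2])
    · by_cases he : s((x : α × β).2, (y : α × β).2) = s(w.2, v₁)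
      · rw [Sym2.eq_iff] at he
        rcases he with ⟨e1, -⟩ | ⟨-, e2⟩
        · exact hB x hxs e1
        · exact hB y hys e2
      · apply hPxy
        have hadj' : (T₂ \ fromEdgeSet {s(w.2, v₁)}).Adj (x : α × β).2 (y : α × β).2 := by
          rw [sdiff_adj, fromEdgeSet_adj]
          refine ⟨h.1, ?_⟩
          rintro ⟨h', -⟩
          exact he (by simpa using h')
        exact ⟨fun hp => hp.trans hadj'.reachable, fun hp => hp.trans hadj'.symm.reachable⟩
  -- assemble
  obtain ⟨x, hxs, hx1⟩ := hA'
  obtain ⟨y, hys, hy2⟩ := hB'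
  have hxT := valT x hxs
  have hyT := valT y hys
  refine ⟨⟨x, hxT, hx1⟩, ⟨y, hyT, hy2⟩, ?_⟩
  have e₁ := chainCC (q₂.takeUntil x hxs)
    (fun z hz => valT z (Walk.support_takeUntil_subset _ hxs hz))
  have e₂ := chainCC (q₂.takeUntil y hys)
    (fun z hz => valT z (Walk.support_takeUntil_subset _ hys hz))
  have ey : Relation.EqvGen (RelCC T) (Sum.inl (y : α × β).1) (Sum.inr (y : α × β).2) :=
    Relation.EqvGen.rel _ _ ⟨(y : α × β), hyT, rfl, rfl⟩
  rw [hx1] at e₁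
  rw [hy2] at ey
  exact Relation.EqvGen.trans _ _ _
    (Relation.EqvGen.trans _ _ _ (Relation.EqvGen.symm _ _ e₁) e₂) ey

section CCAux
variable {α β : Type*}

def TstarCC (S : Set (α × β)) : Set (α × β) :=
  {p | (∃ s ∈ S, s.1 = p.1) ∧ (∃ s ∈ S, s.2 = p.2) ∧
    Relation.EqvGen (RelCC S) (Sum.inl p.1) (Sum.inr p.2)}

lemma tstar_convex {T₁ : SimpleGraph α} {T₂ : SimpleGraph β}
    (ht1 : T₁.IsAcyclic) (ht2 : T₂.IsAcyclic) (S : Set (α × β)) :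
    CycleConvex (T₁ □ T₂) (TstarCC S) := by
  intro w hw c hc
  obtain ⟨hx, hy, hL⟩ := keyCC ht1 ht2 _ w hw c hc
  apply hw
  refine ⟨?_, ?_, eqvGen_mono (fun p hp => hp.2.2) hL⟩
  · obtain ⟨x, hxT, hx1⟩ := hx
    obtain ⟨s, hs, hs1⟩ := hxT.1
    exact ⟨s, hs, hs1.trans hx1⟩
  · obtain ⟨y, hyT, hy2⟩ := hy
    obtain ⟨s, hs, hs2⟩ := hyT.2.1
    exact ⟨s, hs, hs2.trans hy2⟩

lemma lower_bound {T₁ : SimpleGraph α} {T₂ : SimpleGraph β} [Fintype α] [Fintype β]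
    [Nonempty α] [Nonempty β]
    (ht1 : T₁.IsAcyclic) (ht2 : T₂.IsAcyclic)
    (S : Set (α × β)) (hS : cycleHull (T₁ □ T₂) S = Set.univ) :
    Fintype.card α + Fintype.card β - 1 ≤ S.ncard := by
  classical
  have hsub : S ⊆ TstarCC S := fun p hp =>
    ⟨⟨p, hp, rfl⟩, ⟨p, hp, rfl⟩, Relation.EqvGen.rel _ _ ⟨p, hp, rfl, rfl⟩⟩
  have hTuniv : TstarCC S = Set.univ := by
    apply Set.eq_univ_of_univ_subset
    rw [← hS]
    exact Set.sInter_subset_of_mem ⟨hsub, tstar_convex ht1 ht2 S⟩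
  let B : SimpleGraph (α ⊕ β) :=
    { Adj := fun i j => RelCC S i j ∨ RelCC S j i
      symm := ⟨fun i j h => h.elim Or.inr Or.inl⟩
      loopless := ⟨by
        rintro i (⟨p, -, rfl, e2⟩ | ⟨p, -, e1, rfl⟩)
        · exact Sum.inl_ne_inr e2
        · exact Sum.inr_ne_inl e1⟩ }
  have toReach : ∀ {i j}, Relation.EqvGen (RelCC S) i j → B.Reachable i j := by
    intro i j h
    induction h with
    | rel x y hxy => exact SimpleGraph.Adj.reachable (Or.inl hxy)
    | refl x => exact SimpleGraph.Reachable.refl x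
    | symm x y _ ih => exact ih.symm
    | trans x y z _ _ ih1 ih2 => exact ih1.trans ih2
  have hall : ∀ (u : α) (v : β), Relation.EqvGen (RelCC S) (Sum.inl u) (Sum.inr v) := by
    intro u v
    have hm : (u, v) ∈ TstarCC S := by rw [hTuniv]; trivial
    exact hm.2.2
  have hBconn : B.Connected := by
    rw [SimpleGraph.connected_iff]
    refine ⟨?_, inferInstance⟩
    intro i j
    rcases i with u | v <;> rcases j with u' | v'
    · exact (toReach (hall u (Classical.arbitrary β))).trans
        (toReach (hall u' (Classical.arbitrary β))).symm
    · exact toReach (hall u v')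
    · exact (toReach (hall u' v)).symm
    · exact ((toReach (hall (Classical.arbitrary α) v)).symm).trans
        (toReach (hall (Classical.arbitrary α) v'))
  set r : α ⊕ β := Sum.inl (Classical.arbitrary α) with hr
  have hpar : ∀ i : α ⊕ β, i ≠ r → ∃ jp : (α ⊕ β) × (α × β), jp.2 ∈ S ∧
      B.dist jp.1 r + 1 = B.dist i r ∧
      ((i = Sum.inl jp.2.1 ∧ jp.1 = Sum.inr jp.2.2) ∨
        (i = Sum.inr jp.2.2 ∧ jp.1 = Sum.inl jp.2.1)) := by
    intro i hi
    obtain ⟨j, hadj, hdist⟩ := exists_parent hBconn hi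
    rcases hadj with h | h
    · obtain ⟨p, hp, e1, e2⟩ := h
      exact ⟨(j, p), hp, hdist, Or.inl ⟨e1, e2⟩⟩
    · obtain ⟨p, hp, e1, e2⟩ := h
      exact ⟨(j, p), hp, hdist, Or.inr ⟨e2, e1⟩⟩
  choose F hF1 hF2 hF3 using hpar
  have hinj : Function.Injective
      (fun i : {i : α ⊕ β // i ≠ r} => (F i.1 i.2).2) := by
    intro i i' he
    simp only at he
    rcases hF3 i.1 i.2 with ⟨e1, e2⟩ | ⟨e1, e2⟩ <;>
      rcases hF3 i'.1 i'.2 with ⟨f1, f2⟩ | ⟨f1, f2⟩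
    · exact Subtype.ext (by rw [e1, he, ← f1])
    · exfalso
      have d1 := hF2 i.1 i.2
      have d2 := hF2 i'.1 i'.2
      rw [e2] at d1
      rw [f2] at d2
      rw [he] at d1
      rw [← f1] at d1
      rw [← he] at d2
      rw [← e1] at d2
      omega
    · exfalso
      have d1 := hF2 i.1 i.2
      have d2 := hF2 i'.1 i'.2
      rw [e2] at d1
      rw [f2] at d2
      rw [he] at d1
      rw [← f1] at d1
      rw [← he] at d2
      rw [← e1] at d2
      omega
    · exact Subtype.ext (by rw [e1, he, ← f1])
  have hcard : Fintype.card {i : α ⊕ β // i ≠ r} ≤ S.ncard := by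
    have hinj2 : Function.Injective
        (fun i : {i : α ⊕ β // i ≠ r} => (⟨(F i.1 i.2).2, hF1 i.1 i.2⟩ : S)) := by
      intro a b h
      exact hinj (congrArg Subtype.val h)
    have hle := Fintype.card_le_of_injective _ hinj2
    rwa [Set.ncard_eq_toFinset_card', Set.toFinset_card]
  have hcard2 : Fintype.card {i : α ⊕ β // i ≠ r} = Fintype.card α + Fintype.card β - 1 := by
    have h1 : Fintype.card {i : α ⊕ β // ¬ (i = r)} =
        Fintype.card (α ⊕ β) - Fintype.card {i : α ⊕ β // i = r} :=
      Fintype.card_subtype_compl _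
    simp only [Fintype.card_subtype_eq, Fintype.card_sum] at h1
    exact h1
  omega

end CCAux

section CCUpper
variable {α β : Type*}

lemma cross_hull {T₁ : SimpleGraph α} {T₂ : SimpleGraph β} [Fintype α] [Fintype β]
    (h₁ : T₁.IsTree) (h₂ : T₂.IsTree) (a : α) (b : β) :
    cycleHull (T₁ □ T₂) {p : α × β | p.1 = a ∨ p.2 = b} = Set.univ := by
  classical
  have main : ∀ T : Set (α × β), {p : α × β | p.1 = a ∨ p.2 = b} ⊆ T →
      CycleConvex (T₁ □ T₂) T → T = Set.univ := by
    intro T hsub hconv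
    by_contra hne
    have hcne : Tᶜ.Nonempty := by rw [Set.nonempty_compl]; exact hne
    obtain ⟨w, hwc, hmin⟩ := Set.exists_min_image Tᶜ
      (fun p => T₁.dist p.1 a + T₂.dist p.2 b) (Set.toFinite _) hcne
    have hw1 : w.1 ≠ a := fun e => hwc (hsub (Or.inl e))
    have hw2 : w.2 ≠ b := fun e => hwc (hsub (Or.inr e))
    obtain ⟨u', hau, hdu⟩ := exists_parent h₁.isConnected hw1
    obtain ⟨v', hbv, hdv⟩ := exists_parent h₂.isConnected hw2
    have hm1 : (u', w.2) ∈ T := by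
      by_contra hmem
      have hle := hmin _ hmem
      dsimp only at hle
      omega
    have hm2 : (w.1, v') ∈ T := by
      by_contra hmem
      have hle := hmin _ hmem
      dsimp only at hle
      omega
    have hm3 : (u', v') ∈ T := by
      by_contra hmem
      have hle := hmin _ hmem
      dsimp only at hle
      omega
    have hz0 : w ∈ insert w T := Set.mem_insert w T
    have hz1 : (u', w.2) ∈ insert w T := Set.mem_insert_of_mem _ hm1
    have hz2 : (u', v') ∈ insert w T := Set.mem_insert_of_mem _ hm3
    have hz3 : (w.1, v') ∈ insert w T := Set.mem_insert_of_mem _ hm2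
    set G' := (T₁ □ T₂).induce (insert w T) with hG'
    set z0 : ↥(insert w T) := ⟨w, hz0⟩ with hz0'
    set z1 : ↥(insert w T) := ⟨(u', w.2), hz1⟩ with hz1'
    set z2 : ↥(insert w T) := ⟨(u', v'), hz2⟩ with hz2'
    set z3 : ↥(insert w T) := ⟨(w.1, v'), hz3⟩ with hz3'
    have a01 : G'.Adj z0 z1 := by
      show (T₁ □ T₂).Adj w (u', w.2)
      rw [SimpleGraph.boxProd_adj]; left; exact ⟨hau, rfl⟩
    have a12 : G'.Adj z1 z2 := by
      show (T₁ □ T₂).Adj (u', w.2) (u', v')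
      rw [SimpleGraph.boxProd_adj]; right; exact ⟨hbv, rfl⟩
    have a23 : G'.Adj z2 z3 := by
      show (T₁ □ T₂).Adj (u', v') (w.1, v')
      rw [SimpleGraph.boxProd_adj]; left; exact ⟨hau.symm, rfl⟩
    have a30 : G'.Adj z3 z0 := by
      show (T₁ □ T₂).Adj (w.1, v') w
      rw [SimpleGraph.boxProd_adj]; right; exact ⟨hbv.symm, rfl⟩
    have hne1 : w.1 ≠ u' := hau.ne
    have hne2 : w.2 ≠ v' := hbv.ne
    have e01 : z0 ≠ z1 := fun h => hne1 (Prod.ext_iff.mp (Subtype.ext_iff.mp h)).1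
    have e02 : z0 ≠ z2 := fun h => hne1 (Prod.ext_iff.mp (Subtype.ext_iff.mp h)).1
    have e03 : z0 ≠ z3 := fun h => hne2 (Prod.ext_iff.mp (Subtype.ext_iff.mp h)).2
    have e12 : z1 ≠ z2 := fun h => hne2 (Prod.ext_iff.mp (Subtype.ext_iff.mp h)).2
    have e13 : z1 ≠ z3 := fun h => hne1 ((Prod.ext_iff.mp (Subtype.ext_iff.mp h)).1).symm
    have e23 : z2 ≠ z3 := fun h => hne1 ((Prod.ext_iff.mp (Subtype.ext_iff.mp h)).1).symm
    let c : G'.Walk z0 z0 :=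
      SimpleGraph.Walk.cons a01 (SimpleGraph.Walk.cons a12
        (SimpleGraph.Walk.cons a23 (SimpleGraph.Walk.cons a30 SimpleGraph.Walk.nil)))
    have n1 : s(z0, z1) ≠ s(z1, z2) := by
      rw [Ne, Sym2.eq_iff]
      rintro (⟨h1, -⟩ | ⟨h1, -⟩)
      · exact e01 h1
      · exact e02 h1
    have n2 : s(z0, z1) ≠ s(z2, z3) := by
      rw [Ne, Sym2.eq_iff]
      rintro (⟨h1, -⟩ | ⟨h1, -⟩)
      · exact e02 h1
      · exact e03 h1
    have n3 : s(z0, z1) ≠ s(z3, z0) := by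
      rw [Ne, Sym2.eq_iff]
      rintro (⟨h1, -⟩ | ⟨-, h2⟩)
      · exact e03 h1
      · exact e13 h2
    have n4 : s(z1, z2) ≠ s(z2, z3) := by
      rw [Ne, Sym2.eq_iff]
      rintro (⟨h1, -⟩ | ⟨h1, -⟩)
      · exact e12 h1
      · exact e13 h1
    have n5 : s(z1, z2) ≠ s(z3, z0) := by
      rw [Ne, Sym2.eq_iff]
      rintro (⟨h1, -⟩ | ⟨-, h2⟩)
      · exact e13 h1
      · exact e23 h2
    have n6 : s(z2, z3) ≠ s(z3, z0) := by
      rw [Ne, Sym2.eq_iff]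
      rintro (⟨h1, -⟩ | ⟨h1, -⟩)
      · exact e23 h1
      · exact e02 h1.symm
    have hcyc : c.IsCycle := by
      rw [SimpleGraph.Walk.isCycle_def]
      refine ⟨?_, by simp [c], ?_⟩
      · rw [SimpleGraph.Walk.isTrail_def]
        have hE : c.edges = [s(z0, z1), s(z1, z2), s(z2, z3), s(z3, z0)] := rfl
        rw [hE]
        refine List.nodup_cons.mpr ⟨?_, List.nodup_cons.mpr ⟨?_,
          List.nodup_cons.mpr ⟨?_, List.nodup_singleton _⟩⟩⟩
        · intro h
          simp only [List.mem_cons, List.not_mem_nil, or_false, List.mem_singleton] at h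
          rcases h with h | h | h
          exacts [n1 h, n2 h, n3 h]
        · intro h
          simp only [List.mem_cons, List.not_mem_nil, or_false, List.mem_singleton] at h
          rcases h with h | h
          exacts [n4 h, n5 h]
        · intro h
          simp only [List.mem_singleton] at h
          exact n6 h
      · have hS : c.support.tail = [z1, z2, z3, z0] := rfl
        rw [hS]
        refine List.nodup_cons.mpr ⟨?_, List.nodup_cons.mpr ⟨?_,
          List.nodup_cons.mpr ⟨?_, List.nodup_singleton _⟩⟩⟩
        · intro h
          simp only [List.mem_cons, List.not_mem_nil, or_false, List.mem_singleton] at h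
          rcases h with h | h | h
          exacts [e12 h, e13 h, e01 h.symm]
        · intro h
          simp only [List.mem_cons, List.not_mem_nil, or_false, List.mem_singleton] at h
          rcases h with h | h
          exacts [e23 h, e02 h.symm]
        · intro h
          simp only [List.mem_singleton] at h
          exact e03 h.symm
    exact hconv w hwc c hcyc
  apply Set.eq_univ_of_univ_subset
  intro x _
  rw [cycleHull, Set.mem_sInter]
  intro T hT
  rw [main T hT.1 hT.2]
  trivial

end CCUpper

end MyAux

theorem stmt_10 [Fintype α] [Fintype β] (T₁ : SimpleGraph α) (T₂ : SimpleGraph β)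
    [Nontrivial α] [Nontrivial β] (h₁ : T₁.IsTree) (h₂ : T₂.IsTree)
    (m n : ℕ) (hm : Fintype.card α = m) (hn : Fintype.card β = n) :
    cycleHullNumber (T₁ □ T₂) = m + n - 1 := by
  classical
  subst hm hn
  have a : α := Classical.arbitrary α
  have b : β := Classical.arbitrary β
  have hm1 : 1 ≤ Fintype.card α := Fintype.card_pos
  have hn1 : 1 ≤ Fintype.card β := Fintype.card_pos
  -- the cross and its cardinality
  have hcross : ({p : α × β | p.1 = a ∨ p.2 = b} : Set (α × β)) =
      ((fun v : β => (a, v)) '' Set.univ) ∪ ((fun u : α => (u, b)) '' {u | u ≠ a}) := by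
    ext p
    simp only [Set.mem_setOf_eq, Set.mem_union, Set.mem_image, Set.mem_univ, true_and]
    constructor
    · rintro (h | h)
      · exact Or.inl ⟨p.2, by rw [← h]⟩
      · by_cases hpa : p.1 = a
        · exact Or.inl ⟨p.2, by rw [← hpa]⟩
        · exact Or.inr ⟨p.1, hpa, by rw [← h]⟩
    · rintro (⟨v, rfl⟩ | ⟨u, hu, rfl⟩)
      · left; rfl
      · right; rfl
  have hnc : ({p : α × β | p.1 = a ∨ p.2 = b} : Set (α × β)).ncard =
      Fintype.card α + Fintype.card β - 1 := by
    rw [hcross, Set.ncard_union_eq ?_ (Set.toFinite _) (Set.toFinite _)]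
    · rw [Set.ncard_image_of_injective _ (fun x y h => (Prod.ext_iff.mp h).2),
        Set.ncard_image_of_injective _ (fun x y h => (Prod.ext_iff.mp h).1)]
      have h2 : {u : α | u ≠ a} = Set.univ \ {a} := by ext; simp
      rw [h2, Set.ncard_diff_singleton_of_mem (Set.mem_univ a), Set.ncard_univ,
        Set.ncard_univ, Nat.card_eq_fintype_card, Nat.card_eq_fintype_card]
      omega
    · rw [Set.disjoint_left]
      rintro p ⟨v, -, rfl⟩ ⟨u, hu, he⟩
      exact hu (congrArg Prod.fst he)
  have hhull := cross_hull h₁ h₂ a b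
  have hmem : Fintype.card α + Fintype.card β - 1 ∈
      {k : ℕ | ∃ S : Set (α × β), S.ncard = k ∧ cycleHull (T₁ □ T₂) S = Set.univ} :=
    ⟨{p : α × β | p.1 = a ∨ p.2 = b}, hnc, hhull⟩
  apply le_antisymm
  · exact Nat.sInf_le hmem
  · refine le_csInf ⟨_, hmem⟩ ?_
    rintro k ⟨S, rfl, hS⟩
    exact lower_bound h₁.2 h₂.2 S hS
end
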